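/- arXiv:2006.05122 — 6 statements merged into one kernel-verified Lean document; each statement's English description precedes it below -/
import Mathlib

section
/- Suppose there exist T > 0, G : ℝ₊ → ℝ₊ and μ₀ > 0 such that the wave equation associated with A is approximately observable from B* in time T with cost G and threshold μ₀. Then for every λ ∈ ℂ and every v ∈ D(A) with Av = λ²v and B*v = 0, one has v = 0. -/
open Complex

/-- If there exist `T > 0`, a cost function `G` and a threshold `μ₀ > 0`
such that the wave equation associated with `A` is approximately observable from `B*` in
time `T` with cost `G` and threshold `μ₀`, then any eigenfunction-type element
`v ∈ D(A)` with `A v = λ² v` and `B* v = 0` (for some `λ ∈ ℂ`) vanishes. -/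
theorem statement1
    {H Y : Type*} [NormedAddCommGroup H] [InnerProductSpace ℂ H] [CompleteSpace H]
    [NormedAddCommGroup Y] [InnerProductSpace ℂ Y] [CompleteSpace Y]
    (D : Submodule ℂ H) (A : H →ₗ[ℂ] H) (B : Y →L[ℂ] H)
    (hdense : Dense (D : Set H))
    (hsym : ∀ v ∈ D, ∀ w ∈ D, (inner ℂ (A v) w : ℂ) = inner ℂ v (A w))
    (hpos : ∀ v ∈ D, 0 ≤ (inner ℂ (A v) v : ℂ).re ∧ (inner ℂ (A v) v : ℂ).im = 0)
    (hself : ∀ w w' : H, (∀ v ∈ D, (inner ℂ (A v) w : ℂ) = inner ℂ v w') → w ∈ D ∧ A w = w')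
    -- `R` is the bounded inverse of `A + Id`
    (R : H →L[ℂ] H)
    (hR1 : ∀ f : H, R f ∈ D ∧ A (R f) + R f = f)
    (hR2 : ∀ v ∈ D, R (A v + v) = v)
    -- approximate observability for some `T > 0`, cost `G` and threshold `μ₀ > 0`
    (hobs : ∃ T : ℝ, 0 < T ∧ ∃ G : ℝ → ℝ, ∃ μ₀ : ℝ, 0 < μ₀ ∧
      ∀ u u' u'' : ℝ → H,
      (∀ t ∈ Set.Icc (0:ℝ) T, HasDerivAt u (u' t) t) →
      (∀ t ∈ Set.Icc (0:ℝ) T, HasDerivAt u' (u'' t) t) →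
      ContinuousOn u'' (Set.Icc (0:ℝ) T) →
      (∀ t ∈ Set.Icc (0:ℝ) T, u t ∈ D) →
      ContinuousOn (fun t => A (u t)) (Set.Icc (0:ℝ) T) →
      (∀ t ∈ Set.Icc (0:ℝ) T, u'' t + A (u t) = 0) →
      ∀ μ : ℝ, μ₀ ≤ μ →
        Real.sqrt (‖u 0‖ ^ 2 + (inner ℂ (R (u' 0)) (u' 0) : ℂ).re)
          ≤ G μ * Real.sqrt (∫ t in (0:ℝ)..T, ‖(ContinuousLinearMap.adjoint B) (u t)‖ ^ 2)
            + (1 / μ) * Real.sqrt ((inner ℂ (A (u 0) + u 0) (u 0) : ℂ).re + ‖u' 0‖ ^ 2)) :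
    ∀ lam : ℂ, ∀ v ∈ D, A v = lam ^ 2 • v → (ContinuousLinearMap.adjoint B) v = 0 →
      v = 0 := by
  intro lam v hvD hAv hBv
  obtain ⟨T, hT, G, μ₀, hμ₀, hO⟩ := hobs
  set f : ℝ → ℂ := fun t => Complex.exp (I * lam * t) with hf
  set u : ℝ → H := fun t => f t • v with hu
  set u1 : ℝ → H := fun t => (f t * (I * lam)) • v with hu1
  set u2 : ℝ → H := fun t => (f t * (I * lam) * (I * lam)) • v with hu2
  have hfD : ∀ t : ℝ, HasDerivAt f (f t * (I * lam)) t := by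
    intro t
    have h1 : HasDerivAt (fun s : ℝ => I * lam * (s : ℂ)) (I * lam) t := by
      simpa using (Complex.ofRealCLM.hasDerivAt (x := t)).const_mul (I * lam)
    simpa [hf, Function.comp_def] using (Complex.hasDerivAt_exp (I * lam * t)).comp t h1
  have hu' : ∀ t : ℝ, HasDerivAt u (u1 t) t := fun t => (hfD t).smul_const v
  have hu1' : ∀ t : ℝ, HasDerivAt u1 (u2 t) t :=
    fun t => ((hfD t).mul_const (I * lam)).smul_const v
  have hfc : Continuous f := by
    apply Complex.continuous_exp.comp
    exact (continuous_const.mul Complex.continuous_ofReal)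
  have hu2c : Continuous u2 :=
    ((hfc.mul continuous_const).mul continuous_const).smul continuous_const
  have huD : ∀ t : ℝ, u t ∈ D := fun t => D.smul_mem _ hvD
  have hAu : (fun t => A (u t)) = fun t => (f t * lam ^ 2) • v := by
    funext t
    simp [hu, map_smul, hAv, smul_smul]
  have hAuc : Continuous (fun t => A (u t)) := by
    rw [hAu]
    exact (hfc.mul continuous_const).smul continuous_const
  have heq : ∀ t : ℝ, u2 t + A (u t) = 0 := by
    intro t
    have h0 : A (u t) = (f t * lam ^ 2) • v := congrFun hAu t
    rw [h0, hu2]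
    rw [← add_smul]
    have hcoef : f t * (I * lam) * (I * lam) + f t * lam ^ 2 = 0 := by
      linear_combination (f t * lam ^ 2) * Complex.I_sq
    rw [hcoef, zero_smul]
  have hB : ∀ t : ℝ, (ContinuousLinearMap.adjoint B) (u t) = 0 := by
    intro t
    simp [hu, map_smul, hBv]
  have hu0 : u 0 = v := by simp [hu, hf]
  have hu10 : u1 0 = (I * lam) • v := by simp [hu1, hf]
  have key := hO u u1 u2 (fun t _ => hu' t) (fun t _ => hu1' t) hu2c.continuousOn
    (fun t _ => huD t) hAuc.continuousOn (fun t _ => heq t)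
  have hint : (∫ t in (0:ℝ)..T, ‖(ContinuousLinearMap.adjoint B) (u t)‖ ^ 2) = 0 := by
    simp [hB]
  set w : H := u1 0 with hw
  -- nonnegativity of the `R` term
  have hc : 0 ≤ (inner ℂ (R w) w : ℂ).re := by
    obtain ⟨hRD, hREq⟩ := hR1 w
    have h1 : (inner ℂ (R w) w : ℂ) = inner ℂ (R w) (A (R w)) + inner ℂ (R w) (R w) := by
      nth_rewrite 2 [← hREq]
      rw [inner_add_right]
    have h2 : (inner ℂ (R w) (A (R w)) : ℂ) = starRingEnd ℂ (inner ℂ (A (R w)) (R w)) :=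
      (inner_conj_symm _ _).symm
    have h3 : 0 ≤ (inner ℂ (A (R w)) (R w) : ℂ).re := (hpos _ hRD).1
    have h4 : 0 ≤ (inner ℂ (R w) (R w) : ℂ).re := by
      simpa using inner_self_nonneg (𝕜 := ℂ) (x := R w)
    rw [h1]
    simp only [Complex.add_re, h2, Complex.conj_re]
    linarith
  set C : ℝ := Real.sqrt ((inner ℂ (A (u 0) + u 0) (u 0) : ℂ).re + ‖u1 0‖ ^ 2) with hC
  have hCnn : 0 ≤ C := Real.sqrt_nonneg _
  have hbound : ∀ μ : ℝ, μ₀ ≤ μ → ‖v‖ ≤ (1 / μ) * C := by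
    intro μ hμ
    have h := key μ hμ
    rw [hint] at h
    simp only [Real.sqrt_zero, mul_zero, zero_add] at h
    refine le_trans ?_ h
    have h5 : ‖v‖ ^ 2 ≤ ‖u 0‖ ^ 2 + (inner ℂ (R w) w : ℂ).re := by
      rw [hu0]; linarith
    calc ‖v‖ = Real.sqrt (‖v‖ ^ 2) := (Real.sqrt_sq (norm_nonneg v)).symm
      _ ≤ _ := Real.sqrt_le_sqrt h5
  by_contra hv
  have hvpos : 0 < ‖v‖ := norm_pos_iff.mpr hv
  have hx : 0 ≤ (C + 1) / ‖v‖ := by positivity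
  have hμge : μ₀ ≤ μ₀ + (C + 1) / ‖v‖ := by linarith
  have hμpos : 0 < μ₀ + (C + 1) / ‖v‖ := lt_of_lt_of_le hμ₀ hμge
  have h := hbound _ hμge
  have hlt : (1 / (μ₀ + (C + 1) / ‖v‖)) * C < ‖v‖ := by
    rw [one_div, ← div_eq_inv_mul, div_lt_iff₀ hμpos]
    have h1 : C + 1 ≤ ‖v‖ * ((C + 1) / ‖v‖) := by
      rw [mul_div_cancel₀ _ (ne_of_gt hvpos)]
    have h2 : 0 < ‖v‖ * μ₀ := mul_pos hvpos hμ₀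
    calc C < C + 1 := by linarith
      _ ≤ ‖v‖ * ((C + 1) / ‖v‖) := h1
      _ ≤ ‖v‖ * (μ₀ + (C + 1) / ‖v‖) := by nlinarith
  linarith
end

section
/- Assume Hypothesis (R) with a function G satisfying G(μ) ≥ c₀ > 0 for all μ ≥ 0 and with λ₀ ≥ 1, and set K := (1 + √2 ‖B‖)² + 2√2 / c₀. Then for every real λ ≥ λ₀² and every v ∈ D(A): ‖v‖_H ≤ K · G(√λ)² · ‖(A − λ + i BB*)v‖_H. -/
open Complex

lemma aux_real6 (v F t G c₀ b : ℝ) (hv : 0 ≤ v) (hF : 0 ≤ F) (ht : 0 ≤ t) (hb : 0 ≤ b)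
    (hc : 0 < c₀) (hG : c₀ ≤ G) (h1 : v ≤ G * (t + (F + b * t))) (h2 : t ^ 2 ≤ v * F) :
    v ≤ ((1 + Real.sqrt 2 * b) ^ 2 + 2 * Real.sqrt 2 / c₀) * G ^ 2 * F := by
  have hs : (1:ℝ) ≤ Real.sqrt 2 := by
    nlinarith [Real.sq_sqrt (by norm_num : (2:ℝ) ≥ 0), Real.sqrt_nonneg 2]
  have hG0 : 0 < G := lt_of_lt_of_le hc hG
  set a := G * (1 + b) with ha
  have ha0 : 0 ≤ a := by positivity
  have key : a * t ≤ (a ^ 2 * F + v) / 2 := by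
    nlinarith [sq_nonneg (a ^ 2 * F - v), sq_nonneg (a * t), mul_nonneg (mul_nonneg ha0 ha0) hF,
      mul_nonneg ha0 ht, sq_nonneg (a ^ 2 * F + v - 2 * a * t)]
  have hv2 : v ≤ a ^ 2 * F + 2 * G * F := by nlinarith
  have hfin : a ^ 2 * F + 2 * G * F
      ≤ ((1 + Real.sqrt 2 * b) ^ 2 + 2 * Real.sqrt 2 / c₀) * G ^ 2 * F := by
    have h2G : 2 * G ≤ 2 * Real.sqrt 2 / c₀ * G ^ 2 := by
      rw [div_mul_eq_mul_div, le_div_iff₀ hc]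
      nlinarith
    have hA : a ^ 2 ≤ (1 + Real.sqrt 2 * b) ^ 2 * G ^ 2 := by
      rw [ha]
      nlinarith [Real.sq_sqrt (show (0:ℝ) ≤ 2 by norm_num),
        mul_nonneg (mul_nonneg (sub_nonneg.2 hs) hb) (sq_nonneg G),
        mul_nonneg (mul_nonneg hb hb) (sq_nonneg G)]
    nlinarith [mul_le_mul_of_nonneg_right hA hF, mul_le_mul_of_nonneg_right h2G hF]
  linarith

/-- Assume Hypothesis (R): `‖v‖ ≤ G(λ)(‖B*v‖ + ‖(A − λ²)v‖)` for all
`v ∈ D(A)` and real `λ ≥ λ₀`, with `G(μ) ≥ c₀ > 0` for all `μ ≥ 0` and `λ₀ ≥ 1`. Set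
`K = (1 + √2‖B‖)² + 2√2/c₀`. Then for every real `λ ≥ λ₀²` and every `v ∈ D(A)`:
`‖v‖ ≤ K G(√λ)² ‖(A − λ + i BB*)v‖`. -/
theorem statement6
    {H Y : Type*} [NormedAddCommGroup H] [InnerProductSpace ℂ H] [CompleteSpace H]
    [NormedAddCommGroup Y] [InnerProductSpace ℂ Y] [CompleteSpace Y]
    (D : Submodule ℂ H) (A : H →ₗ[ℂ] H) (B : Y →L[ℂ] H)
    (hdense : Dense (D : Set H))
    (hsym : ∀ v ∈ D, ∀ w ∈ D, (inner ℂ (A v) w : ℂ) = inner ℂ v (A w))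
    (hpos : ∀ v ∈ D, 0 ≤ (inner ℂ (A v) v : ℂ).re ∧ (inner ℂ (A v) v : ℂ).im = 0)
    (hself : ∀ w w' : H, (∀ v ∈ D, (inner ℂ (A v) w : ℂ) = inner ℂ v w') → w ∈ D ∧ A w = w')
    (G : ℝ → ℝ) (c₀ : ℝ) (hc₀ : 0 < c₀) (hGc₀ : ∀ μ : ℝ, 0 ≤ μ → c₀ ≤ G μ)
    (lam₀ : ℝ) (hlam₀ : 1 ≤ lam₀)
    (hR : ∀ v ∈ D, ∀ lam : ℝ, lam₀ ≤ lam →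
      ‖v‖ ≤ G lam * (‖(ContinuousLinearMap.adjoint B) v‖
          + ‖A v - ((lam : ℂ) ^ 2) • v‖)) :
    ∀ lam : ℝ, lam₀ ^ 2 ≤ lam → ∀ v ∈ D,
      ‖v‖ ≤ ((1 + Real.sqrt 2 * ‖B‖) ^ 2 + 2 * Real.sqrt 2 / c₀)
              * (G (Real.sqrt lam)) ^ 2
            * ‖A v - (lam : ℂ) • v
                + Complex.I • B ((ContinuousLinearMap.adjoint B) v)‖ := by
  intro lam hlam v hv
  have hlam₀0 : (0:ℝ) ≤ lam₀ := by linarith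
  have hlam0 : (0:ℝ) ≤ lam := le_trans (by nlinarith) hlam
  set μ := Real.sqrt lam with hμdef
  have hμ0 : 0 ≤ μ := Real.sqrt_nonneg _
  have hμ : lam₀ ≤ μ := by
    have := Real.sqrt_le_sqrt hlam
    rwa [Real.sqrt_sq hlam₀0] at this
  have hμ2 : ((μ : ℂ)) ^ 2 = (lam : ℂ) := by
    norm_cast
    exact Real.sq_sqrt hlam0
  set f := A v - (lam : ℂ) • v + Complex.I • B ((ContinuousLinearMap.adjoint B) v) with hf
  set t := ‖(ContinuousLinearMap.adjoint B) v‖ with htdef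
  -- key inner-product estimate: t² ≤ ‖v‖ ‖f‖
  have h2 : t ^ 2 ≤ ‖v‖ * ‖f‖ := by
    have him : (inner ℂ v f : ℂ).im = t ^ 2 := by
      have h1 : (inner ℂ v (A v) : ℂ).im = 0 := by
        rw [← hsym v hv v hv]; exact (hpos v hv).2
      have hBB : (inner ℂ v (B ((ContinuousLinearMap.adjoint B) v)) : ℂ) = (t : ℂ) ^ 2 := by
        rw [← ContinuousLinearMap.adjoint_inner_left, inner_self_eq_norm_sq_to_K]; norm_cast
      rw [hf, inner_add_right, inner_sub_right, inner_smul_right, inner_smul_right, hBB,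
        inner_self_eq_norm_sq_to_K]
      simp [h1, ← Complex.ofReal_pow]
    calc t ^ 2 = (inner ℂ v f : ℂ).im := him.symm
      _ ≤ ‖(inner ℂ v f : ℂ)‖ := (le_abs_self _).trans (Complex.abs_im_le_norm _)
      _ = ‖(inner ℂ v f : ℂ)‖ := rfl
      _ ≤ ‖v‖ * ‖f‖ := norm_inner_le_norm _ _
  -- hypothesis (R) at μ
  have hRv : ‖v‖ ≤ G μ * (t + ‖A v - (lam : ℂ) • v‖) := by
    have := hR v hv μ hμ
    rwa [hμ2] at this
  -- triangle estimate
  have htri : ‖A v - (lam : ℂ) • v‖ ≤ ‖f‖ + ‖B‖ * t := by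
    have heq : A v - (lam : ℂ) • v = f - Complex.I • B ((ContinuousLinearMap.adjoint B) v) := by
      rw [hf]; abel
    rw [heq]
    refine (norm_sub_le _ _).trans ?_
    have : ‖Complex.I • B ((ContinuousLinearMap.adjoint B) v)‖
        = ‖B ((ContinuousLinearMap.adjoint B) v)‖ := by
      rw [norm_smul, Complex.norm_I, one_mul]
    rw [this]
    have := B.le_opNorm ((ContinuousLinearMap.adjoint B) v)
    linarith
  have hGμ : c₀ ≤ G μ := hGc₀ μ hμ0
  have hG0 : 0 ≤ G μ := le_of_lt (lt_of_lt_of_le hc₀ hGμ)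
  have h1 : ‖v‖ ≤ G μ * (t + (‖f‖ + ‖B‖ * t)) := by
    refine hRv.trans ?_
    have : t + ‖A v - (lam : ℂ) • v‖ ≤ t + (‖f‖ + ‖B‖ * t) := by linarith
    exact mul_le_mul_of_nonneg_left this hG0
  exact aux_real6 ‖v‖ ‖f‖ t (G μ) c₀ ‖B‖ (norm_nonneg _) (norm_nonneg _) (norm_nonneg _)
    (norm_nonneg _) hc₀ hGμ h1 h2
end

section
/- Assume Hypothesis (UCP). If z ∈ ℂ and u ∈ D(A) with u ≠ 0 satisfy A_S u = z u, then −‖B*‖² ≤ Re z < 0 and Im z ≥ 0. -/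
open Complex

/-- Assume the unique continuation property (UCP): any `v ∈ D(A)` with
`Av = λ²v` and `B*v = 0` vanishes. If `z ∈ ℂ` is an eigenvalue of the damped Schrödinger
generator `A_S = iA − BB*`, i.e. `A_S u = z u` for some nonzero `u ∈ D(A)`, then
`−‖B*‖² ≤ Re z < 0` and `Im z ≥ 0`. -/
theorem statement8
    {H Y : Type*} [NormedAddCommGroup H] [InnerProductSpace ℂ H] [CompleteSpace H]
    [NormedAddCommGroup Y] [InnerProductSpace ℂ Y] [CompleteSpace Y]
    (D : Submodule ℂ H) (A : H →ₗ[ℂ] H) (B : Y →L[ℂ] H)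
    (hdense : Dense (D : Set H))
    (hsym : ∀ v ∈ D, ∀ w ∈ D, (inner ℂ (A v) w : ℂ) = inner ℂ v (A w))
    (hpos : ∀ v ∈ D, 0 ≤ (inner ℂ (A v) v : ℂ).re ∧ (inner ℂ (A v) v : ℂ).im = 0)
    (hself : ∀ w w' : H, (∀ v ∈ D, (inner ℂ (A v) w : ℂ) = inner ℂ v w') → w ∈ D ∧ A w = w')
    (hUCP : ∀ lam : ℂ, ∀ v ∈ D, A v = lam ^ 2 • v →
      (ContinuousLinearMap.adjoint B) v = 0 → v = 0)
    (z : ℂ) (u : H) (hu : u ∈ D) (hu0 : u ≠ 0)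
    (heig : Complex.I • A u - B ((ContinuousLinearMap.adjoint B) u) = z • u) :
    -‖ContinuousLinearMap.adjoint B‖ ^ 2 ≤ z.re ∧ z.re < 0 ∧ 0 ≤ z.im := by
  classical
  set Bs := ContinuousLinearMap.adjoint B with hBsdef
  have hn : (0:ℝ) < ‖u‖^2 := by
    have : (0:ℝ) < ‖u‖ := norm_pos_iff.mpr hu0
    positivity
  -- B* u ≠ 0, else UCP contradiction
  have hBsu : Bs u ≠ 0 := by
    intro hB0
    obtain ⟨lam, hlam⟩ := IsAlgClosed.exists_pow_nat_eq (-Complex.I * z) (n := 2) (by norm_num)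
    apply hu0
    apply hUCP lam u hu _ hB0
    have hA : A u = (-Complex.I * z) • u := by
      have h1 : Complex.I • A u = z • u := by
        rw [hB0] at heig; simpa using heig
      have := congrArg (fun w => (-Complex.I) • w) h1
      simp only [smul_smul] at this
      simpa [neg_mul, Complex.I_mul_I] using this
    rw [hA, hlam]
  -- key identity
  have key : z * ((‖u‖:ℂ)^2) = Complex.I * (inner ℂ u (A u) : ℂ) - (‖Bs u‖:ℂ)^2 := by
    have h1 := congrArg (fun w => (inner ℂ u w : ℂ)) heig
    simp only [inner_sub_right, inner_smul_right] at h1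
    rw [← ContinuousLinearMap.adjoint_inner_left, ← hBsdef,
      inner_self_eq_norm_sq_to_K, inner_self_eq_norm_sq_to_K] at h1
    exact h1.symm
  -- c := inner ℂ u (A u) is real nonneg
  have hc : (inner ℂ u (A u) : ℂ).im = 0 ∧ 0 ≤ (inner ℂ u (A u) : ℂ).re := by
    have h := hpos u hu
    have h2 : (inner ℂ u (A u) : ℂ) = starRingEnd ℂ (inner ℂ (A u) u : ℂ) :=
      (inner_conj_symm u (A u)).symm
    rw [h2, Complex.conj_im, Complex.conj_re, h.2]
    exact ⟨neg_zero, h.1⟩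
  set c : ℂ := inner ℂ u (A u) with hcdef
  have hre : z.re * ‖u‖^2 = -‖Bs u‖^2 := by
    have := congrArg Complex.re key
    simp [Complex.mul_re, Complex.mul_im, hc.1, ← Complex.ofReal_pow, Complex.ofReal_re, Complex.ofReal_im] at this
    linarith
  have him : z.im * ‖u‖^2 = c.re := by
    have := congrArg Complex.im key
    simp [Complex.mul_re, Complex.mul_im, hc.1, ← Complex.ofReal_pow, Complex.ofReal_re, Complex.ofReal_im] at this
    linarith
  have hb : (0:ℝ) < ‖Bs u‖^2 := by
    have : ‖Bs u‖ ≠ 0 := norm_ne_zero_iff.mpr hBsu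
    positivity
  have hbound : ‖Bs u‖ ≤ ‖Bs‖ * ‖u‖ := Bs.le_opNorm u
  refine ⟨?_, ?_, ?_⟩
  · nlinarith [norm_nonneg (Bs u), norm_nonneg u, norm_nonneg Bs]
  · nlinarith
  · nlinarith [hc.2]
end

section
/- Assume Hypothesis (R) with a function G satisfying G(μ) ≥ c₀ > 0 for all μ ≥ 0 and with λ₀ ≥ 1, and assume A has compact resolvent. Set K := (1 + √2 ‖B‖)² + 2√2 / c₀. Then for every real λ ≥ λ₀², the operator iλ·Id − A_S : D(A) → H is bijective and ‖(iλ·Id − A_S)^{-1} f‖_H ≤ K·G(√λ)²·‖f‖_H for all f ∈ H. -/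
open Complex

private lemma aux_quad {a g s t β : ℝ} (ha : 0 ≤ a) (hg : 0 ≤ g) (hs : 0 ≤ s)
    (ht : 0 ≤ t) (hβ : 0 ≤ β) (h1 : t ≤ a * β + g * s) (h2 : β ^ 2 ≤ s * t) :
    t ≤ (a ^ 2 + 2 * g) * s := by
  rcases eq_or_lt_of_le hs with h | h
  · have hβ0 : β = 0 := by nlinarith
    nlinarith
  · nlinarith [sq_nonneg (a * s - β), mul_le_mul_of_nonneg_left h1 (le_of_lt h)]

set_option maxHeartbeats 1000000 in
/-- Under Hypothesis (R) (with `G(μ) ≥ c₀ > 0` for all `μ ≥ 0` and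
`λ₀ ≥ 1`) and compactness of the resolvent of `A`, with
`K = (1 + √2‖B‖)² + 2√2/c₀`, for every real `λ ≥ λ₀²` the operator
`iλ·Id − A_S : D(A) → H` (where `A_S = iA − BB*`) is bijective and
`‖(iλ − A_S)⁻¹ f‖ ≤ K G(√λ)² ‖f‖` for all `f ∈ H` (expressed as injectivity on `D(A)`,
surjectivity onto `H`, and `‖v‖ ≤ K G(√λ)² ‖(iλ − A_S)v‖` for `v ∈ D(A)`). -/
theorem statement9
    {H Y : Type*} [NormedAddCommGroup H] [InnerProductSpace ℂ H] [CompleteSpace H]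
    [NormedAddCommGroup Y] [InnerProductSpace ℂ Y] [CompleteSpace Y]
    (D : Submodule ℂ H) (A : H →ₗ[ℂ] H) (B : Y →L[ℂ] H)
    (hdense : Dense (D : Set H))
    (hsym : ∀ v ∈ D, ∀ w ∈ D, (inner ℂ (A v) w : ℂ) = inner ℂ v (A w))
    (hpos : ∀ v ∈ D, 0 ≤ (inner ℂ (A v) v : ℂ).re ∧ (inner ℂ (A v) v : ℂ).im = 0)
    (hself : ∀ w w' : H, (∀ v ∈ D, (inner ℂ (A v) w : ℂ) = inner ℂ v w') → w ∈ D ∧ A w = w')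
    (hres : ∃ R : H →L[ℂ] H, (∀ f : H, R f ∈ D ∧ A (R f) + R f = f) ∧
      (∀ v ∈ D, R (A v + v) = v) ∧ IsCompactOperator (⇑R))
    (G : ℝ → ℝ) (c₀ : ℝ) (hc₀ : 0 < c₀) (hGc₀ : ∀ μ : ℝ, 0 ≤ μ → c₀ ≤ G μ)
    (lam₀ : ℝ) (hlam₀ : 1 ≤ lam₀)
    (hR : ∀ v ∈ D, ∀ lam : ℝ, lam₀ ≤ lam →
      ‖v‖ ≤ G lam * (‖(ContinuousLinearMap.adjoint B) v‖
          + ‖A v - ((lam : ℂ) ^ 2) • v‖)) :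
    ∀ lam : ℝ, lam₀ ^ 2 ≤ lam →
      (∀ v ∈ D, ∀ w ∈ D,
          (Complex.I * (lam : ℂ)) • v
              - (Complex.I • A v - B ((ContinuousLinearMap.adjoint B) v))
            = (Complex.I * (lam : ℂ)) • w
              - (Complex.I • A w - B ((ContinuousLinearMap.adjoint B) w)) →
          v = w) ∧
      (∀ f : H, ∃ v ∈ D,
          (Complex.I * (lam : ℂ)) • v
              - (Complex.I • A v - B ((ContinuousLinearMap.adjoint B) v)) = f) ∧
      (∀ v ∈ D,
        ‖v‖ ≤ ((1 + Real.sqrt 2 * ‖B‖) ^ 2 + 2 * Real.sqrt 2 / c₀)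
                * (G (Real.sqrt lam)) ^ 2
              * ‖(Complex.I * (lam : ℂ)) • v
                  - (Complex.I • A v - B ((ContinuousLinearMap.adjoint B) v))‖) := by
  intro lam hlam
  have hb0 : (0:ℝ) ≤ ‖B‖ := norm_nonneg _
  have hlam1 : (1:ℝ) ≤ lam := by nlinarith
  have hlam0 : (0:ℝ) ≤ lam := by linarith
  have hsqle : lam₀ ≤ Real.sqrt lam := by
    rw [show lam₀ = Real.sqrt (lam₀ ^ 2) by rw [Real.sqrt_sq (by linarith)]]
    exact Real.sqrt_le_sqrt hlam
  have hsq : (Real.sqrt lam : ℝ) ^ 2 = lam := Real.sq_sqrt hlam0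
  have hcast : (((Real.sqrt lam : ℝ) : ℂ)) ^ 2 = (lam : ℂ) := by
    rw [← Complex.ofReal_pow, hsq]
  set g := G (Real.sqrt lam) with hgdef
  have hgc : c₀ ≤ g := hGc₀ _ (Real.sqrt_nonneg _)
  have hg0 : 0 < g := lt_of_lt_of_le hc₀ hgc
  set K : ℝ := (1 + Real.sqrt 2 * ‖B‖) ^ 2 + 2 * Real.sqrt 2 / c₀ with hKdef
  set T : H →ₗ[ℂ] H :=
    (Complex.I * (lam : ℂ)) • (LinearMap.id : H →ₗ[ℂ] H)
      - (Complex.I • A - (B.toLinearMap ∘ₗ (ContinuousLinearMap.adjoint B).toLinearMap))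
    with hTdef
  have hTapply : ∀ v : H, T v = (Complex.I * (lam : ℂ)) • v
      - (Complex.I • A v - B ((ContinuousLinearMap.adjoint B) v)) := by
    intro v
    simp [hTdef, LinearMap.sub_apply, LinearMap.smul_apply, LinearMap.comp_apply]
  -- identity recovering A from T
  have hAx : ∀ x : H, A x = (lam : ℂ) • x
      - Complex.I • (B ((ContinuousLinearMap.adjoint B) x)) + Complex.I • (T x) := by
    intro x
    rw [hTapply]
    match_scalars <;> simp [Complex.ext_iff]
  -- inner product with B B* : transfer
  have hBB : ∀ x y : H, (inner ℂ (B ((ContinuousLinearMap.adjoint B) x)) y : ℂ)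
      = inner ℂ ((ContinuousLinearMap.adjoint B) x) ((ContinuousLinearMap.adjoint B) y) := by
    intro x y
    exact (ContinuousLinearMap.adjoint_inner_right B _ _).symm
  have hBB2 : ∀ x y : H, (inner ℂ x (B ((ContinuousLinearMap.adjoint B) y)) : ℂ)
      = inner ℂ ((ContinuousLinearMap.adjoint B) x) ((ContinuousLinearMap.adjoint B) y) := by
    intro x y
    exact (ContinuousLinearMap.adjoint_inner_left B _ _).symm
  -- the key resolvent estimate
  have est : ∀ v ∈ D, ‖v‖ ≤ K * g ^ 2 * ‖T v‖ := by
    intro v hv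
    set β := ‖(ContinuousLinearMap.adjoint B) v‖ with hβdef
    have hβ0 : (0:ℝ) ≤ β := norm_nonneg _
    -- Step 1 : β² ≤ ‖Tv‖ ‖v‖
    have hre : (inner ℂ v (T v) : ℂ).re = β ^ 2 := by
      have h1 : (inner ℂ v (A v) : ℂ) = inner ℂ (A v) v := (hsym v hv v hv).symm
      have h2 := (hpos v hv).2
      have h3 : (inner ℂ v (B ((ContinuousLinearMap.adjoint B) v)) : ℂ) = ((β : ℂ)) ^ 2 := by
        rw [hBB2, inner_self_eq_norm_sq_to_K, hβdef]
        rfl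
      rw [hTapply]
      rw [inner_sub_right, inner_sub_right, inner_smul_right, inner_smul_right,
        h3, h1, inner_self_eq_norm_sq_to_K]
      have h4 : ((inner ℂ (A v) v : ℂ)) = ((inner ℂ (A v) v : ℂ).re : ℂ) := by
        exact Complex.ext rfl (by simp [h2])
      rw [h4]
      simp [← Complex.ofReal_pow]
    have key1 : β ^ 2 ≤ ‖T v‖ * ‖v‖ := by
      have h := norm_inner_le_norm (𝕜 := ℂ) v (T v)
      have h2 : (inner ℂ v (T v) : ℂ).re ≤ ‖(inner ℂ v (T v) : ℂ)‖ := Complex.re_le_norm _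
      rw [hre] at h2
      calc β ^ 2 ≤ ‖(inner ℂ v (T v) : ℂ)‖ := h2
        _ ≤ ‖v‖ * ‖T v‖ := h
        _ = ‖T v‖ * ‖v‖ := mul_comm _ _
    -- Step 2 : ‖Av - λv‖ ≤ ‖Tv‖ + ‖B‖ β
    have key2 : ‖A v - (lam : ℂ) • v‖ ≤ ‖T v‖ + ‖B‖ * β := by
      have hid : A v - (lam : ℂ) • v
          = Complex.I • (T v) - Complex.I • (B ((ContinuousLinearMap.adjoint B) v)) := by
        rw [hTapply]
        match_scalars <;> simp [Complex.ext_iff]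
      rw [hid]
      calc ‖Complex.I • (T v) - Complex.I • (B ((ContinuousLinearMap.adjoint B) v))‖
          ≤ ‖Complex.I • (T v)‖ + ‖Complex.I • (B ((ContinuousLinearMap.adjoint B) v))‖ :=
            norm_sub_le _ _
        _ = ‖T v‖ + ‖B ((ContinuousLinearMap.adjoint B) v)‖ := by
            simp [norm_smul]
        _ ≤ ‖T v‖ + ‖B‖ * β := by
            have := B.le_opNorm ((ContinuousLinearMap.adjoint B) v)
            linarith
    -- Step 3 : hypothesis (R)
    have key3 : ‖v‖ ≤ g * (β + ‖A v - (lam : ℂ) • v‖) := by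
      have h := hR v hv (Real.sqrt lam) hsqle
      rwa [hcast] at h
    -- Step 4 : combine
    have key4 : ‖v‖ ≤ ((g * (1 + ‖B‖)) ^ 2 + 2 * g) * ‖T v‖ := by
      apply aux_quad (by positivity) hg0.le (norm_nonneg _) (norm_nonneg _) hβ0 _ key1
      have h1 : ‖v‖ ≤ g * β + g * ‖T v‖ + g * (‖B‖ * β) := by
        nlinarith [mul_le_mul_of_nonneg_left key2 hg0.le]
      nlinarith
    -- constant comparison
    have hs2 : (1:ℝ) ≤ Real.sqrt 2 := by
      have h := Real.sqrt_le_sqrt (by norm_num : (1:ℝ) ≤ 2)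
      simpa using h
    have hdiv : g ≤ g ^ 2 / c₀ := by
      rw [le_div_iff₀ hc₀]; nlinarith
    have hd0 : (0:ℝ) ≤ g ^ 2 / c₀ := by positivity
    have e1 : (1 + ‖B‖) ^ 2 * g ^ 2 ≤ (1 + Real.sqrt 2 * ‖B‖) ^ 2 * g ^ 2 := by
      apply mul_le_mul_of_nonneg_right _ (sq_nonneg g)
      nlinarith [mul_nonneg (sub_nonneg.mpr hs2) hb0, sq_nonneg ‖B‖,
        Real.sq_sqrt (show (0:ℝ) ≤ 2 by norm_num)]
    have e2 : 2 * g ≤ 2 * Real.sqrt 2 * (g ^ 2 / c₀) := by nlinarith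
    have hK : (g * (1 + ‖B‖)) ^ 2 + 2 * g ≤ K * g ^ 2 := by
      calc (g * (1 + ‖B‖)) ^ 2 + 2 * g = (1 + ‖B‖) ^ 2 * g ^ 2 + 2 * g := by ring
        _ ≤ (1 + Real.sqrt 2 * ‖B‖) ^ 2 * g ^ 2 + 2 * Real.sqrt 2 * (g ^ 2 / c₀) := by
            linarith
        _ = K * g ^ 2 := by rw [hKdef]; ring
    calc ‖v‖ ≤ ((g * (1 + ‖B‖)) ^ 2 + 2 * g) * ‖T v‖ := key4
      _ ≤ K * g ^ 2 * ‖T v‖ := mul_le_mul_of_nonneg_right hK (norm_nonneg _)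
  have hC0 : (0:ℝ) ≤ K * g ^ 2 := by
    have : (0:ℝ) ≤ K := by positivity
    positivity
  refine ⟨?_, ?_, ?_⟩
  · -- injectivity
    intro v hv w hw hvw
    rw [← hTapply, ← hTapply] at hvw
    have h0 : T (v - w) = 0 := by rw [map_sub, hvw, sub_self]
    have h := est (v - w) (D.sub_mem hv hw)
    rw [h0] at h
    simp only [norm_zero, mul_zero] at h
    have : ‖v - w‖ = 0 := le_antisymm h (norm_nonneg _)
    rwa [norm_sub_eq_zero_iff] at this
  · -- surjectivity
    set M : Submodule ℂ H := D.map T with hMdef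
    have hMc : IsClosed (M : Set H) := by
      apply IsSeqClosed.isClosed
      intro u f hu hconv
      choose v hvD hvT using fun n => Submodule.mem_map.mp (hu n)
      set C := K * g ^ 2 with hCdef
      have hcau : CauchySeq v := by
        rw [Metric.cauchySeq_iff]
        intro ε hε
        obtain ⟨N, hN⟩ := Metric.cauchySeq_iff.mp hconv.cauchySeq (ε / (C + 1))
          (by positivity)
        refine ⟨N, fun m hm n hn => ?_⟩
        have h1 : ‖v m - v n‖ ≤ C * ‖u m - u n‖ := by
          have h := est (v m - v n) (D.sub_mem (hvD m) (hvD n))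
          rwa [map_sub, hvT m, hvT n] at h
        have h2 : dist (u m) (u n) < ε / (C + 1) := hN m hm n hn
        rw [dist_eq_norm] at h2 ⊢
        have hlt : C * (ε / (C + 1)) < ε := by
          have hcc : C / (C + 1) < 1 := (div_lt_one (by linarith)).mpr (by linarith)
          calc C * (ε / (C + 1)) = (C / (C + 1)) * ε := by ring
            _ < 1 * ε := mul_lt_mul_of_pos_right hcc hε
            _ = ε := one_mul ε
        calc ‖v m - v n‖ ≤ C * ‖u m - u n‖ := h1
          _ ≤ C * (ε / (C + 1)) := mul_le_mul_of_nonneg_left h2.le hC0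
          _ < ε := hlt
      obtain ⟨vlim, hvlim⟩ := cauchySeq_tendsto_of_complete hcau
      set w' : H := (lam : ℂ) • vlim
          - Complex.I • (B ((ContinuousLinearMap.adjoint B) vlim)) + Complex.I • f
        with hw'def
      have hAconv : Filter.Tendsto (fun n => A (v n)) Filter.atTop (nhds w') := by
        have heq : (fun n => A (v n)) = fun n => (lam : ℂ) • (v n)
            - Complex.I • (B ((ContinuousLinearMap.adjoint B) (v n))) + Complex.I • (u n) := by
          funext n; rw [hAx, hvT]
        rw [heq]
        have h1 : Filter.Tendsto (fun n => (lam : ℂ) • v n) Filter.atTop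
            (nhds ((lam : ℂ) • vlim)) := hvlim.const_smul _
        have h2 : Filter.Tendsto
            (fun n => Complex.I • (B ((ContinuousLinearMap.adjoint B) (v n)))) Filter.atTop
            (nhds (Complex.I • (B ((ContinuousLinearMap.adjoint B) vlim)))) := by
          exact (((B.continuous.tendsto _).comp
            (((ContinuousLinearMap.adjoint B).continuous.tendsto _).comp hvlim))).const_smul _
        have h3 : Filter.Tendsto (fun n => Complex.I • u n) Filter.atTop
            (nhds (Complex.I • f)) := hconv.const_smul _
        exact (h1.sub h2).add h3
      have hlim : ∀ u' ∈ D, (inner ℂ (A u') vlim : ℂ) = inner ℂ u' w' := by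
        intro u' hu'
        have t1 : Filter.Tendsto (fun n => (inner ℂ (A u') (v n) : ℂ)) Filter.atTop
            (nhds (inner ℂ (A u') vlim)) := Filter.Tendsto.inner tendsto_const_nhds hvlim
        have t2 : Filter.Tendsto (fun n => (inner ℂ u' (A (v n)) : ℂ)) Filter.atTop
            (nhds (inner ℂ u' w')) := Filter.Tendsto.inner tendsto_const_nhds hAconv
        have heq : (fun n => (inner ℂ (A u') (v n) : ℂ)) = fun n => inner ℂ u' (A (v n)) := by
          funext n; exact hsym u' hu' (v n) (hvD n)
        rw [heq] at t1
        exact tendsto_nhds_unique t1 t2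
      obtain ⟨hvD', hAv'⟩ := hself vlim w' hlim
      refine Submodule.mem_map.mpr ⟨vlim, hvD', ?_⟩
      rw [hTapply, hAv', hw'def]
      match_scalars <;> simp [Complex.ext_iff]
    have horth : Mᗮ = ⊥ := by
      rw [Submodule.eq_bot_iff]
      intro w hw
      have hw' : ∀ v ∈ D, (inner ℂ (T v) w : ℂ) = 0 := by
        intro v hv
        exact (Submodule.mem_orthogonal M w).mp hw (T v) (Submodule.mem_map.mpr ⟨v, hv, rfl⟩)
      set w' : H := (lam : ℂ) • w + Complex.I • (B ((ContinuousLinearMap.adjoint B) w))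
        with hw'def
      have hAw : ∀ v ∈ D, (inner ℂ (A v) w : ℂ) = inner ℂ v w' := by
        intro v hv
        have h0 := hw' v hv
        rw [hTapply] at h0
        rw [inner_sub_left, inner_sub_left, inner_smul_left, inner_smul_left] at h0
        rw [hBB] at h0
        rw [hw'def, inner_add_right, inner_smul_right, inner_smul_right, hBB2]
        have : (starRingEnd ℂ) (Complex.I * (lam : ℂ)) = -(Complex.I * (lam : ℂ)) := by
          simp [Complex.ext_iff]
        rw [this] at h0
        have hcI : (starRingEnd ℂ) Complex.I = -Complex.I := Complex.conj_I
        rw [hcI] at h0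
        apply mul_left_cancel₀ Complex.I_ne_zero
        linear_combination h0 + (-(inner ℂ ((ContinuousLinearMap.adjoint B) v)
          ((ContinuousLinearMap.adjoint B) w) : ℂ)) * Complex.I_sq
      obtain ⟨hwD, hAw'⟩ := hself w w' hAw
      -- B* w = 0
      have him := (hpos w hwD).2
      have hcomp : (inner ℂ (A w) w : ℂ)
          = (lam : ℂ) * ((‖w‖ : ℂ)) ^ 2
            - Complex.I * ((‖(ContinuousLinearMap.adjoint B) w‖ : ℂ)) ^ 2 := by
        rw [hAw', hw'def, inner_add_left, inner_smul_left, inner_smul_left, hBB,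
          inner_self_eq_norm_sq_to_K, inner_self_eq_norm_sq_to_K]
        simp [Complex.conj_ofReal, Complex.conj_I]
        ring
      rw [hcomp] at him
      have hBw2 : (‖(ContinuousLinearMap.adjoint B) w‖ : ℝ) ^ 2 = 0 := by
        simp only [← Complex.ofReal_pow, Complex.sub_im, Complex.mul_im, Complex.ofReal_re,
          Complex.ofReal_im, Complex.I_re, Complex.I_im] at him
        linarith
      have hBw : (ContinuousLinearMap.adjoint B) w = 0 := by
        have := pow_eq_zero_iff (n := 2) (by norm_num) |>.mp hBw2
        exact norm_eq_zero.mp this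
      have hAw2 : A w = (lam : ℂ) • w := by
        rw [hAw', hw'def, hBw]
        simp
      have h := hR w hwD (Real.sqrt lam) hsqle
      rw [hcast, hBw, hAw2] at h
      simp only [norm_zero, sub_self, add_zero, zero_add, mul_zero] at h
      exact norm_le_zero_iff.mp h
    have htop : M = ⊤ := by
      have h1 : M.topologicalClosure = ⊤ := Submodule.topologicalClosure_eq_top_iff.mpr horth
      have h2 : M.topologicalClosure ≤ M := Submodule.topologicalClosure_minimal M le_rfl hMc
      exact eq_top_iff.mpr (h1 ▸ h2)
    intro f
    have hf : f ∈ M := htop ▸ Submodule.mem_top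
    obtain ⟨v, hv, hTv⟩ := Submodule.mem_map.mp hf
    exact ⟨v, hv, by rw [← hTapply]; exact hTv⟩
  · intro v hv
    have h := est v hv
    rwa [hTapply] at h
end

section
/- Assume Hypothesis (R) with a function G satisfying G(μ) ≥ c₀ > 0 for all μ ≥ 0 and with λ₀ ≥ 1, and assume A has compact resolvent. Set K := (1 + √2 ‖B‖)² + 2√2 / c₀. Then for every z ∈ ℂ with Im z ≥ λ₀² and Re z ≥ −1/(K·G(√(Im z))²), the only u ∈ D(A) satisfying A_S u = z u is u = 0; i.e., the damped Schrödinger generator A_S has no eigenvalue in this region. -/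
open Complex

lemma aux10 (b c₀ g r : ℝ) (hb : 0 ≤ b) (hc : 0 < c₀) (hg : c₀ ≤ g) (hr : 0 ≤ r)
    (hrb : r ^ 2 ≤ 1 / (((1 + Real.sqrt 2 * b) ^ 2 + 2 * Real.sqrt 2 / c₀) * g ^ 2)) :
    g * (r + r ^ 2 + b * r) < 1 := by
  have hs2 : (Real.sqrt 2) ^ 2 = 2 := Real.sq_sqrt (by norm_num)
  have hs2nn : 0 ≤ Real.sqrt 2 := Real.sqrt_nonneg 2
  have hs2one : 1 < Real.sqrt 2 := by nlinarith
  obtain ⟨s2, hs2def⟩ : ∃ s : ℝ, s = Real.sqrt 2 := ⟨_, rfl⟩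
  rw [← hs2def] at hrb hs2 hs2nn hs2one
  have hg0 : 0 < g := lt_of_lt_of_le hc hg
  obtain ⟨K, hKdef⟩ : ∃ K : ℝ, K = (1 + s2 * b) ^ 2 + 2 * s2 / c₀ := ⟨_, rfl⟩
  rw [← hKdef] at hrb
  have hsb1 : (1:ℝ) ≤ 1 + s2 * b := by nlinarith
  have haux : 0 < 2 * s2 / c₀ := by positivity
  have hK1 : 2 * s2 / c₀ ≤ K := by nlinarith [sq_nonneg (1 + s2 * b)]
  have hKpos : 0 < K := lt_of_lt_of_le haux hK1
  obtain ⟨q, hqdef⟩ : ∃ q : ℝ, q = Real.sqrt K := ⟨_, rfl⟩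
  have hq2 : q ^ 2 = K := by rw [hqdef]; exact Real.sq_sqrt hKpos.le
  have hq0 : 0 < q := by rw [hqdef]; exact Real.sqrt_pos.mpr hKpos
  have hgr : g * r ≤ 1 / q := by
    have h1 : (g * r) ^ 2 ≤ (1 / q) ^ 2 := by
      have e : (1 / q) ^ 2 = 1 / K := by rw [div_pow, one_pow, hq2]
      rw [e]
      calc (g * r) ^ 2 = r ^ 2 * g ^ 2 := by ring
        _ ≤ (1 / (K * g ^ 2)) * g ^ 2 :=
            mul_le_mul_of_nonneg_right hrb (sq_nonneg g)
        _ = 1 / K := by field_simp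
    exact (pow_le_pow_iff_left₀ (by positivity) (one_div_pos.mpr hq0).le two_ne_zero).mp h1
  have hrq : r ≤ 1 / (q * c₀) := by
    have h1 : c₀ * r ≤ 1 / q := le_trans (by nlinarith) hgr
    calc r = (c₀ * r) / c₀ := by field_simp
      _ ≤ (1 / q) / c₀ := by gcongr
      _ = 1 / (q * c₀) := by rw [div_div]
  have hdnn : 0 ≤ s2 / c₀ := by positivity
  have hkey : (1 + b) * q + 1 / c₀ < K := by
    have hsb : (1 + s2 * b) ^ 2 = K - 2 * s2 / c₀ := by rw [hKdef]; ring
    have hKa : 0 ≤ K - s2 / c₀ := by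
      have : 2 * s2 / c₀ = 2 * (s2 / c₀) := by ring
      nlinarith
    have h2 : ((1 + s2 * b) * q) ^ 2 ≤ (K - s2 / c₀) ^ 2 := by
      have e : ((1 + s2 * b) * q) ^ 2 = (K - 2 * (s2 / c₀)) * K := by
        rw [mul_pow, hq2, hsb]; ring
      rw [e]; nlinarith [sq_nonneg (s2 / c₀)]
    have h1 : (1 + s2 * b) * q ≤ K - s2 / c₀ :=
      (pow_le_pow_iff_left₀ (by positivity) hKa two_ne_zero).mp h2
    have h3 : (1 + b) * q ≤ (1 + s2 * b) * q := by nlinarith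
    have h4 : 1 / c₀ < s2 / c₀ := by gcongr
    linarith
  have hgoal : (1 + b) / q + 1 / (q ^ 2 * c₀) < 1 := by
    rw [hq2]
    have e1 : (1 + b) / q = ((1 + b) * q) / K := by
      rw [← hq2]; field_simp
    rw [e1]
    have e2 : ((1 + b) * q) / K + 1 / (K * c₀) = ((1 + b) * q + 1 / c₀) / K := by
      field_simp
    rw [e2]
    exact (div_lt_one hKpos).mpr hkey
  have t1 : (g * r) * (1 + b) ≤ (1 / q) * (1 + b) :=
    mul_le_mul_of_nonneg_right hgr (by linarith)
  have t2 : (g * r) * r ≤ (1 / q) * (1 / (q * c₀)) :=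
    mul_le_mul hgr hrq hr (one_div_pos.mpr hq0).le
  calc g * (r + r ^ 2 + b * r) = (g * r) * (1 + b) + (g * r) * r := by ring
    _ ≤ (1 / q) * (1 + b) + (1 / q) * (1 / (q * c₀)) := by linarith
    _ = (1 + b) / q + 1 / (q ^ 2 * c₀) := by ring
    _ < 1 := hgoal

/-- Under Hypothesis (R) (with `G(μ) ≥ c₀ > 0` for all `μ ≥ 0` and
`λ₀ ≥ 1`) and compactness of the resolvent of `A`, with `K = (1 + √2‖B‖)² + 2√2/c₀`,
the damped Schrödinger generator `A_S = iA − BB*` has no eigenvalue `z` with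
`Im z ≥ λ₀²` and `Re z ≥ −1/(K G(√(Im z))²)`: any `u ∈ D(A)` with `A_S u = z u`
vanishes. -/
theorem statement10
    {H Y : Type*} [NormedAddCommGroup H] [InnerProductSpace ℂ H] [CompleteSpace H]
    [NormedAddCommGroup Y] [InnerProductSpace ℂ Y] [CompleteSpace Y]
    (D : Submodule ℂ H) (A : H →ₗ[ℂ] H) (B : Y →L[ℂ] H)
    (hdense : Dense (D : Set H))
    (hsym : ∀ v ∈ D, ∀ w ∈ D, (inner ℂ (A v) w : ℂ) = inner ℂ v (A w))
    (hpos : ∀ v ∈ D, 0 ≤ (inner ℂ (A v) v : ℂ).re ∧ (inner ℂ (A v) v : ℂ).im = 0)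
    (hself : ∀ w w' : H, (∀ v ∈ D, (inner ℂ (A v) w : ℂ) = inner ℂ v w') → w ∈ D ∧ A w = w')
    (hres : ∃ R : H →L[ℂ] H, (∀ f : H, R f ∈ D ∧ A (R f) + R f = f) ∧
      (∀ v ∈ D, R (A v + v) = v) ∧ IsCompactOperator (⇑R))
    (G : ℝ → ℝ) (c₀ : ℝ) (hc₀ : 0 < c₀) (hGc₀ : ∀ μ : ℝ, 0 ≤ μ → c₀ ≤ G μ)
    (lam₀ : ℝ) (hlam₀ : 1 ≤ lam₀)
    (hR : ∀ v ∈ D, ∀ lam : ℝ, lam₀ ≤ lam →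
      ‖v‖ ≤ G lam * (‖(ContinuousLinearMap.adjoint B) v‖
          + ‖A v - ((lam : ℂ) ^ 2) • v‖)) :
    ∀ z : ℂ, lam₀ ^ 2 ≤ z.im →
      -(1 / (((1 + Real.sqrt 2 * ‖B‖) ^ 2 + 2 * Real.sqrt 2 / c₀)
            * (G (Real.sqrt z.im)) ^ 2)) ≤ z.re →
      ∀ u ∈ D, Complex.I • A u - B ((ContinuousLinearMap.adjoint B) u) = z • u →
        u = 0 := by
  intro z hzim hzre u hu hequ
  by_contra hne
  have hN : 0 < ‖u‖ := norm_pos_iff.mpr hne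
  obtain ⟨Bs, hBsdef⟩ : ∃ Bs : H →L[ℂ] Y, Bs = ContinuousLinearMap.adjoint B := ⟨_, rfl⟩
  rw [← hBsdef] at hequ
  rw [show ContinuousLinearMap.adjoint B = Bs from hBsdef.symm] at hR
  -- complex identity from taking inner product with u
  have hinner : Complex.I * (inner ℂ (A u) u : ℂ) - ((‖Bs u‖ ^ 2 : ℝ) : ℂ)
      = z * ((‖u‖ ^ 2 : ℝ) : ℂ) := by
    have h0 : (inner ℂ u (Complex.I • A u - B (Bs u)) : ℂ) = inner ℂ u (z • u) := by
      rw [hequ]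
    rw [inner_sub_right, inner_smul_right, inner_smul_right,
      ← hsym u hu u hu, ← ContinuousLinearMap.adjoint_inner_left,
      ← hBsdef] at h0
    rw [inner_self_eq_norm_sq_to_K, inner_self_eq_norm_sq_to_K] at h0
    push_cast at h0 ⊢
    exact h0
  have him : (inner ℂ (A u) u : ℂ).im = 0 := (hpos u hu).2
  -- real part
  have hre : z.re * ‖u‖ ^ 2 = -‖Bs u‖ ^ 2 := by
    have h := congrArg Complex.re hinner
    simp [Complex.mul_re, Complex.mul_im, him, pow_two] at h
    rw [pow_two, pow_two]
    linarith
  have hzrele : z.re ≤ 0 := by nlinarith [hre, sq_nonneg ‖Bs u‖, pow_pos hN 2]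
  obtain ⟨p, hpdef⟩ : ∃ p : ℝ, p = -z.re := ⟨_, rfl⟩
  have hp0 : 0 ≤ p := by rw [hpdef]; linarith
  obtain ⟨r, hrdef⟩ : ∃ r : ℝ, r = Real.sqrt p := ⟨_, rfl⟩
  have hr0 : 0 ≤ r := hrdef ▸ Real.sqrt_nonneg p
  have hr2p : r ^ 2 = p := by rw [hrdef]; exact Real.sq_sqrt hp0
  have hβ : ‖Bs u‖ = r * ‖u‖ := by
    have h1 : ‖Bs u‖ ^ 2 = (r * ‖u‖) ^ 2 := by
      rw [mul_pow, hr2p, hpdef]; linarith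
    exact (pow_le_pow_iff_left₀ (norm_nonneg _) (by positivity) two_ne_zero).mp h1.le
      |>.antisymm ((pow_le_pow_iff_left₀ (by positivity) (norm_nonneg _) two_ne_zero).mp h1.ge)
  -- lambda
  have hzim0 : 0 ≤ z.im := le_trans (by positivity) hzim
  obtain ⟨lam, hlamdef⟩ : ∃ l : ℝ, l = Real.sqrt z.im := ⟨_, rfl⟩
  rw [← hlamdef] at hzre
  have hlamge : lam₀ ≤ lam := by
    have h : lam₀ = Real.sqrt (lam₀ ^ 2) := (Real.sqrt_sq (by linarith)).symm
    rw [h, hlamdef]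
    exact Real.sqrt_le_sqrt hzim
  have hlam2 : ((lam : ℂ)) ^ 2 = (z.im : ℂ) := by
    have h : lam ^ 2 = z.im := by rw [hlamdef]; exact Real.sq_sqrt hzim0
    norm_cast
  -- expression for A u - lam^2 u
  have hAeq : A u - ((lam : ℂ) ^ 2) • u
      = (-(Complex.I * (z.re : ℂ))) • u - Complex.I • B (Bs u) := by
    have h1 : Complex.I • A u = z • u + B (Bs u) := sub_eq_iff_eq_add.mp hequ
    have h3 : (-Complex.I) • (Complex.I • A u) = A u := by
      rw [smul_smul, neg_mul, Complex.I_mul_I, neg_neg, one_smul]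
    have h2 : A u = (-Complex.I * z) • u + (-Complex.I) • B (Bs u) := by
      rw [← h3, h1, smul_add, smul_smul]
    have hsc : -Complex.I * z - (z.im : ℂ) = -(Complex.I * (z.re : ℂ)) := by
      apply Complex.ext <;> simp [Complex.mul_re, Complex.mul_im]
    rw [h2, hlam2, ← hsc, sub_smul, neg_smul]
    abel
  -- norm bound
  have hnorm : ‖A u - ((lam : ℂ) ^ 2) • u‖ ≤ p * ‖u‖ + ‖B‖ * ‖Bs u‖ := by
    rw [hAeq]
    have h1 : ‖(-(Complex.I * (z.re : ℂ))) • u‖ = p * ‖u‖ := by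
      rw [norm_smul, norm_neg, norm_mul, Complex.norm_I, one_mul, Complex.norm_real,
        Real.norm_eq_abs, abs_of_nonpos hzrele, hpdef]
    have h2 : ‖Complex.I • B (Bs u)‖ ≤ ‖B‖ * ‖Bs u‖ := by
      rw [norm_smul, Complex.norm_I, one_mul]
      exact B.le_opNorm _
    calc ‖(-(Complex.I * (z.re : ℂ))) • u - Complex.I • B (Bs u)‖
        ≤ ‖(-(Complex.I * (z.re : ℂ))) • u‖ + ‖Complex.I • B (Bs u)‖ := norm_sub_le _ _
      _ ≤ p * ‖u‖ + ‖B‖ * ‖Bs u‖ := by rw [h1]; linarith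
  -- apply hypothesis (R)
  have hGlam : c₀ ≤ G lam := hGc₀ lam (hlamdef ▸ Real.sqrt_nonneg _)
  have hineq : ‖u‖ ≤ (G lam * (r + r ^ 2 + ‖B‖ * r)) * ‖u‖ := by
    calc ‖u‖ ≤ G lam * (‖Bs u‖ + ‖A u - ((lam : ℂ) ^ 2) • u‖) := hR u hu lam hlamge
      _ ≤ G lam * (r * ‖u‖ + (p * ‖u‖ + ‖B‖ * (r * ‖u‖))) := by
          have hin : ‖Bs u‖ + ‖A u - ((lam : ℂ) ^ 2) • u‖
              ≤ r * ‖u‖ + (p * ‖u‖ + ‖B‖ * (r * ‖u‖)) := by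
            rw [hβ] at hnorm
            rw [hβ]
            linarith
          exact mul_le_mul_of_nonneg_left hin (le_trans hc₀.le hGlam)
      _ = (G lam * (r + r ^ 2 + ‖B‖ * r)) * ‖u‖ := by rw [hr2p]; ring
  have h1le : 1 ≤ G lam * (r + r ^ 2 + ‖B‖ * r) := by
    by_contra h
    push_neg at h
    have h2 := mul_lt_mul_of_pos_right h hN
    rw [one_mul] at h2
    linarith
  have hrbound : r ^ 2 ≤ 1 / (((1 + Real.sqrt 2 * ‖B‖) ^ 2 + 2 * Real.sqrt 2 / c₀)
      * (G lam) ^ 2) := by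
    rw [hr2p, hpdef]
    linarith
  have := aux10 ‖B‖ c₀ (G lam) r (norm_nonneg B) hc₀ hGlam hr0 hrbound
  linarith
end

section
/- Assume Hypothesis (R). Then for every v ∈ D(A²) (i.e. v ∈ D(A) with Av ∈ D(A)) and every real λ ≥ λ₀²: ‖v‖_H ≤ G(√λ)·( ‖B*v‖_Y + λ^{-1}‖(A² − λ²)v‖_H ). -/
open Complex

/-- Assume Hypothesis (R): `‖v‖ ≤ G(λ)(‖B*v‖ + ‖(A − λ²)v‖)` for all
`v ∈ D(A)` and real `λ ≥ λ₀`. Then for every `v ∈ D(A²)` and every real `λ ≥ λ₀²`: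
`‖v‖ ≤ G(√λ)(‖B*v‖ + λ⁻¹ ‖(A² − λ²)v‖)`. -/
theorem statement15
    {H Y : Type*} [NormedAddCommGroup H] [InnerProductSpace ℂ H] [CompleteSpace H]
    [NormedAddCommGroup Y] [InnerProductSpace ℂ Y] [CompleteSpace Y]
    (D : Submodule ℂ H) (A : H →ₗ[ℂ] H) (B : Y →L[ℂ] H)
    (hdense : Dense (D : Set H))
    (hsym : ∀ v ∈ D, ∀ w ∈ D, (inner ℂ (A v) w : ℂ) = inner ℂ v (A w))
    (hpos : ∀ v ∈ D, 0 ≤ (inner ℂ (A v) v : ℂ).re ∧ (inner ℂ (A v) v : ℂ).im = 0)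
    (hself : ∀ w w' : H, (∀ v ∈ D, (inner ℂ (A v) w : ℂ) = inner ℂ v w') → w ∈ D ∧ A w = w')
    (G : ℝ → ℝ) (lam₀ : ℝ) (hlam₀ : 1 ≤ lam₀)
    (hR : ∀ v ∈ D, ∀ lam : ℝ, lam₀ ≤ lam →
      ‖v‖ ≤ G lam * (‖(ContinuousLinearMap.adjoint B) v‖
          + ‖A v - ((lam : ℂ) ^ 2) • v‖)) :
    ∀ v ∈ D, A v ∈ D → ∀ lam : ℝ, lam₀ ^ 2 ≤ lam →
      ‖v‖ ≤ G (Real.sqrt lam)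
            * (‖(ContinuousLinearMap.adjoint B) v‖
                + lam⁻¹ * ‖A (A v) - ((lam : ℂ) ^ 2) • v‖) := by
  intro v hv hAv lam hlam
  have hone : (1 : ℝ) ≤ lam := le_trans (by nlinarith) hlam
  have hlampos : (0 : ℝ) < lam := lt_of_lt_of_le one_pos hone
  have hlam0pos : (0 : ℝ) < lam₀ := lt_of_lt_of_le one_pos hlam₀
  set μ := Real.sqrt lam with hμdef
  have hμsq : μ ^ 2 = lam := Real.sq_sqrt hlampos.le
  have hμge : lam₀ ≤ μ := by
    have := Real.sqrt_le_sqrt hlam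
    rwa [Real.sqrt_sq hlam0pos.le] at this
  have hμC : ((μ : ℂ)) ^ 2 = (lam : ℂ) := by
    norm_cast
  -- key estimate: for w ∈ D, lam * ‖w‖ ≤ ‖A w + lam • w‖
  have key : ∀ w ∈ D, lam * ‖w‖ ≤ ‖A w + (lam : ℂ) • w‖ := by
    intro w hw
    have h1 : (lam * ‖w‖) ^ 2 ≤ ‖A w + (lam : ℂ) • w‖ ^ 2 := by
      have hexp : ‖A w + (lam : ℂ) • w‖ ^ 2
          = ‖A w‖ ^ 2 + 2 * (RCLike.re (inner ℂ (A w) ((lam : ℂ) • w) : ℂ))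
            + ‖(lam : ℂ) • w‖ ^ 2 := @norm_add_sq ℂ H _ _ _ _ _
      have hin : (RCLike.re (inner ℂ (A w) ((lam : ℂ) • w) : ℂ))
          = lam * (inner ℂ (A w) w : ℂ).re := by
        rw [inner_smul_right]
        simp [Complex.mul_re]
      have hposw := (hpos w hw).1
      have hns : ‖(lam : ℂ) • w‖ ^ 2 = lam ^ 2 * ‖w‖ ^ 2 := by
        rw [norm_smul]
        simp [Complex.norm_real, abs_of_pos hlampos, mul_pow]
      rw [hexp, hin, hns]
      nlinarith [norm_nonneg (A w), sq_nonneg (‖A w‖)]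
    have h2 : 0 ≤ lam * ‖w‖ := mul_nonneg hlampos.le (norm_nonneg _)
    nlinarith [norm_nonneg (A w + (lam : ℂ) • w)]
  -- w := A v - lam • v
  have hwD : A v - (lam : ℂ) • v ∈ D := D.sub_mem hAv (D.smul_mem _ hv)
  have hfact : A (A v - (lam : ℂ) • v) + (lam : ℂ) • (A v - (lam : ℂ) • v)
      = A (A v) - ((lam : ℂ) ^ 2) • v := by
    rw [map_sub, map_smul]
    rw [smul_sub, smul_smul]
    ring_nf
    abel
  have hkey := key _ hwD
  rw [hfact] at hkey
  have hstep : ‖A v - (lam : ℂ) • v‖ ≤ lam⁻¹ * ‖A (A v) - ((lam : ℂ) ^ 2) • v‖ := by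
    rw [le_inv_mul_iff₀ hlampos]
    exact hkey
  have hRv := hR v hv μ hμge
  rw [hμC] at hRv
  by_cases hG : 0 ≤ G μ
  · calc ‖v‖ ≤ G μ * (‖(ContinuousLinearMap.adjoint B) v‖ + ‖A v - (lam : ℂ) • v‖) := hRv
      _ ≤ G μ * (‖(ContinuousLinearMap.adjoint B) v‖
            + lam⁻¹ * ‖A (A v) - ((lam : ℂ) ^ 2) • v‖) := by
        apply mul_le_mul_of_nonneg_left _ hG
        linarith
  · push_neg at hG
    have hc : 0 ≤ ‖(ContinuousLinearMap.adjoint B) v‖ + ‖A v - (lam : ℂ) • v‖ := by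
      positivity
    have : ‖v‖ ≤ 0 := le_trans hRv (mul_nonpos_of_nonpos_of_nonneg hG.le hc)
    have hv0 : v = 0 := norm_le_zero_iff.mp this
    subst hv0
    simp
end
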